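/- Let $R(t)$ be twice differentiable with $R(t)\ne 1$, satisfying $2t^2R(1-R)R''-t^2(1-2R)(R')^2+2tR(1-R)R'+2t^2R^5+t(4n+2+2\alpha+2\gamma-5t)R^4-4t(2n+1+\alpha+\gamma-t)R^3-[t^2-2(2n+1+\alpha+\gamma)t+\alpha^2-\gamma^2]R^2-2\gamma^2R+\gamma^2=0$ on an interval with $t>0$. Then $S(t):=\frac{R(t)}{R(t)-1}$ (which satisfies $S\notin\{0,1\}$ where $R\notin\{0,1\}$) solves the Painlevé V equation $S''=\frac{(3S-1)(S')^2}{2S(S-1)}-\frac{S'}{t}+\frac{(S-1)^2}{t^2}\Big(\frac{\alpha^2 S}{2}-\frac{\gamma^2}{2S}\Big)-\frac{(2n+1+\alpha+\gamma)S}{t}-\frac{S(S+1)}{2(S-1)}$. -/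

import Mathlib

set_option maxHeartbeats 2000000

/-- `S := R/(R-1)` satisfies the Painlevé V equation
`P_V(α²/2, -γ²/2, -(2n+1+α+γ), -1/2)`. -/
theorem stmt_11 (n : ℕ) (α γ : ℝ) (R R1 R2 : ℝ → ℝ)
    (hR0 : ∀ t : ℝ, 0 < t → R t ≠ 0)
    (hR1ne : ∀ t : ℝ, 0 < t → R t ≠ 1)
    (hR : ∀ t : ℝ, 0 < t → HasDerivAt R (R1 t) t)
    (hR1 : ∀ t : ℝ, 0 < t → HasDerivAt R1 (R2 t) t)
    (hode : ∀ t : ℝ, 0 < t →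
      2 * t ^ 2 * R t * (1 - R t) * R2 t - t ^ 2 * (1 - 2 * R t) * (R1 t) ^ 2
        + 2 * t * R t * (1 - R t) * R1 t + 2 * t ^ 2 * (R t) ^ 5
        + t * (4 * n + 2 + 2 * α + 2 * γ - 5 * t) * (R t) ^ 4
        - 4 * t * (2 * n + 1 + α + γ - t) * (R t) ^ 3
        - (t ^ 2 - 2 * (2 * n + 1 + α + γ) * t + α ^ 2 - γ ^ 2) * (R t) ^ 2
        - 2 * γ ^ 2 * R t + γ ^ 2 = 0) :
    ∀ t : ℝ, 0 < t →
      (R t / (R t - 1) ≠ 0 ∧ R t / (R t - 1) ≠ 1) ∧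
      deriv (deriv (fun s => R s / (R s - 1))) t
        = (3 * (R t / (R t - 1)) - 1) * (deriv (fun s => R s / (R s - 1)) t) ^ 2
            / (2 * (R t / (R t - 1)) * (R t / (R t - 1) - 1))
          - deriv (fun s => R s / (R s - 1)) t / t
          + ((R t / (R t - 1) - 1) ^ 2 / t ^ 2)
              * (α ^ 2 * (R t / (R t - 1)) / 2 - γ ^ 2 / (2 * (R t / (R t - 1))))
          - (2 * n + 1 + α + γ) * (R t / (R t - 1)) / t
          - (R t / (R t - 1)) * (R t / (R t - 1) + 1) / (2 * (R t / (R t - 1) - 1)) := by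
  -- derivative of S at any s > 0
  have hsub : ∀ s : ℝ, 0 < s → R s - 1 ≠ 0 := fun s hs => sub_ne_zero.mpr (hR1ne s hs)
  have hS : ∀ s : ℝ, 0 < s →
      HasDerivAt (fun u => R u / (R u - 1)) (-(R1 s) / (R s - 1) ^ 2) s := by
    intro s hs
    have h := (hR s hs).fun_div ((hR s hs).sub_const 1) (hsub s hs)
    refine h.congr_deriv ?_
    rw [div_eq_div_iff (pow_ne_zero 2 (hsub s hs)) (pow_ne_zero 2 (hsub s hs))]
    ring
  have hd1 : ∀ s : ℝ, 0 < s →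
      deriv (fun u => R u / (R u - 1)) s = -(R1 s) / (R s - 1) ^ 2 := fun s hs =>
    (hS s hs).deriv
  intro t ht
  have ht0 : t ≠ 0 := ne_of_gt ht
  have hr0 := hR0 t ht
  have hrs := hsub t ht
  -- second derivative
  have heq : deriv (fun u => R u / (R u - 1)) =ᶠ[nhds t] fun s => -(R1 s) / (R s - 1) ^ 2 :=
    Filter.eventuallyEq_of_mem (Ioi_mem_nhds ht) (fun s hs => hd1 s hs)
  have hD : HasDerivAt (fun s => -(R1 s) / (R s - 1) ^ 2)
      ((-(R2 t) * (R t - 1) ^ 2 - (-(R1 t)) * (2 * (R t - 1) * R1 t)) / ((R t - 1) ^ 2) ^ 2) t := by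
    have hnum : HasDerivAt (fun s => -(R1 s)) (-(R2 t)) t := (hR1 t ht).neg
    have hden : HasDerivAt (fun s => (R s - 1) ^ 2) (2 * (R t - 1) * R1 t) t := by
      have := ((hR t ht).sub_const 1).fun_pow 2
      simpa [mul_comm, mul_assoc, mul_left_comm] using this
    exact hnum.div hden (pow_ne_zero 2 hrs)
  have hd2 : deriv (deriv (fun s => R s / (R s - 1))) t
      = (-(R2 t) * (R t - 1) ^ 2 - (-(R1 t)) * (2 * (R t - 1) * R1 t)) / ((R t - 1) ^ 2) ^ 2 := by
    rw [heq.deriv_eq]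
    exact hD.deriv
  have hSne : R t / (R t - 1) ≠ 0 := div_ne_zero hr0 hrs
  have hSne1 : R t / (R t - 1) ≠ 1 := by
    intro hc
    rw [div_eq_iff hrs] at hc
    linarith
  refine ⟨⟨hSne, hSne1⟩, ?_⟩
  rw [hd2, hd1 t ht]
  have h := hode t ht
  have hS1 : R t / (R t - 1) - 1 ≠ 0 := sub_ne_zero.mpr hSne1
  field_simp
  linear_combination h
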